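/- arXiv:1905.08354 — 2 statements merged into one kernel-verified Lean document; each statement's English description precedes it below -/
import Mathlib

section
/- For all y in (0, π), 1/sin(y)^2 - 1/y^2 ≥ 1/3. -/
open Real

lemma aux_sin_ge (x : ℝ) (hx : 0 ≤ x) : x - x ^ 3 / 6 ≤ Real.sin x := by
  have key : MonotoneOn (fun x : ℝ => Real.sin x - x + x ^ 3 / 6) (Set.Ici 0) := by
    apply monotoneOn_of_deriv_nonneg (convex_Ici 0)
    · fun_prop
    · exact (Differentiable.differentiableOn (by fun_prop)).mono interior_subset
    · intro t ht
      have : deriv (fun x : ℝ => Real.sin x - x + x ^ 3 / 6) t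
          = Real.cos t - 1 + t ^ 2 / 2 := by
        have h := ((Real.hasDerivAt_sin t).sub (hasDerivAt_id t)).add
          ((hasDerivAt_pow 3 t).div_const 6)
        refine h.deriv.trans ?_; norm_num; ring
      rw [this]
      nlinarith [Real.one_sub_sq_div_two_le_cos (x := t)]
  have := key (Set.self_mem_Ici) (Set.mem_Ici.2 hx) hx
  simp at this
  linarith

lemma aux_cos_le (x : ℝ) (hx : 0 ≤ x) : Real.cos x ≤ 1 - x ^ 2 / 2 + x ^ 4 / 24 := by
  have key : MonotoneOn (fun x : ℝ => 1 - x ^ 2 / 2 + x ^ 4 / 24 - Real.cos x)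
      (Set.Ici 0) := by
    apply monotoneOn_of_deriv_nonneg (convex_Ici 0)
    · fun_prop
    · exact (Differentiable.differentiableOn (by fun_prop)).mono interior_subset
    · intro t ht
      have ht0 : 0 ≤ t := le_of_lt (by simpa using ht)
      have : deriv (fun x : ℝ => 1 - x ^ 2 / 2 + x ^ 4 / 24 - Real.cos x) t
          = -t + t ^ 3 / 6 + Real.sin t := by
        have h := (((hasDerivAt_const t (1:ℝ)).sub ((hasDerivAt_pow 2 t).div_const 2)).add
          ((hasDerivAt_pow 4 t).div_const 24)).sub (Real.hasDerivAt_cos t)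
        refine h.deriv.trans ?_; norm_num; ring
      rw [this]
      nlinarith [aux_sin_ge t ht0]
  have := key (Set.self_mem_Ici) (Set.mem_Ici.2 hx) hx
  simp at this
  linarith

lemma aux_sin_le (x : ℝ) (hx : 0 ≤ x) : Real.sin x ≤ x - x ^ 3 / 6 + x ^ 5 / 120 := by
  have key : MonotoneOn (fun x : ℝ => x - x ^ 3 / 6 + x ^ 5 / 120 - Real.sin x)
      (Set.Ici 0) := by
    apply monotoneOn_of_deriv_nonneg (convex_Ici 0)
    · fun_prop
    · exact (Differentiable.differentiableOn (by fun_prop)).mono interior_subset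
    · intro t ht
      have ht0 : 0 ≤ t := le_of_lt (by simpa using ht)
      have : deriv (fun x : ℝ => x - x ^ 3 / 6 + x ^ 5 / 120 - Real.sin x) t
          = 1 - t ^ 2 / 2 + t ^ 4 / 24 - Real.cos t := by
        have h := (((hasDerivAt_id t).sub ((hasDerivAt_pow 3 t).div_const 6)).add
          ((hasDerivAt_pow 5 t).div_const 120)).sub (Real.hasDerivAt_sin t)
        refine h.deriv.trans ?_; norm_num; ring
      rw [this]
      nlinarith [aux_cos_le t ht0]
  have := key (Set.self_mem_Ici) (Set.mem_Ici.2 hx) hx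
  simp at this
  linarith

theorem stmt_2 (y : ℝ) (hy : y ∈ Set.Ioo 0 π) :
    1 / Real.sin y ^ 2 - 1 / y ^ 2 ≥ 1 / 3 := by
  obtain ⟨hy0, hyπ⟩ := hy
  have hs : 0 < Real.sin y := Real.sin_pos_of_pos_of_lt_pi hy0 hyπ
  have hu : Real.sin y ≤ y - y ^ 3 / 6 + y ^ 5 / 120 := aux_sin_le y hy0.le
  have hyb : y < 3.15 := hyπ.trans Real.pi_lt_d2
  -- key polynomial inequality
  have ht9 : y ^ 2 ≤ 9.9225 := by nlinarith
  have hg : 0 ≤ 2880 - 520 * y ^ 2 + 37 * y ^ 4 - y ^ 6 := by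
    nlinarith [mul_nonneg (sub_nonneg.2 ht9) (sq_nonneg (y ^ 2 - 13.54)),
      sub_nonneg.2 ht9, sq_nonneg (y ^ 2)]
  have key : (y - y ^ 3 / 6 + y ^ 5 / 120) ^ 2 * (3 + y ^ 2) ≤ 3 * y ^ 2 := by
    nlinarith [mul_nonneg (pow_nonneg hy0.le 6) hg]
  have hkey : Real.sin y ^ 2 * (3 + y ^ 2) ≤ 3 * y ^ 2 := by
    have hsq : Real.sin y ^ 2 ≤ (y - y ^ 3 / 6 + y ^ 5 / 120) ^ 2 := by
      have hupos : 0 < y - y ^ 3 / 6 + y ^ 5 / 120 := lt_of_lt_of_le hs hu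
      nlinarith
    nlinarith [sq_nonneg y]
  have hs2 : 0 < Real.sin y ^ 2 := by positivity
  have hy2 : 0 < y ^ 2 := by positivity
  rw [ge_iff_le, div_sub_div _ _ (ne_of_gt hs2) (ne_of_gt hy2), div_le_div_iff₀ (by norm_num)
    (by positivity)]
  nlinarith
end

section
/- For W ∈ (0,1/2), the constant A_W = (2π²/cos²(πW)) · (1/4 - W²)² satisfies π²/8 ≤ A_W ≤ 2. -/
open Real

lemma sin_ge_sub_cube' {x : ℝ} (hx : 0 ≤ x) : x - x ^ 3 / 6 ≤ Real.sin x := by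
  have hmono : MonotoneOn (fun y : ℝ => Real.sin y - y + y ^ 3 / 6) (Set.Ici 0) := by
    apply monotoneOn_of_deriv_nonneg (convex_Ici 0)
    · exact (Real.continuous_sin.sub continuous_id).add
        ((continuous_pow 3).div_const 6) |>.continuousOn
    · intro y _
      exact (((Real.hasDerivAt_sin y).sub (hasDerivAt_id y)).add
        ((hasDerivAt_pow 3 y).div_const 6)).differentiableAt.differentiableWithinAt
    · intro y hy
      rw [interior_Ici] at hy
      have hd : deriv (fun y : ℝ => Real.sin y - y + y ^ 3 / 6) y
          = Real.cos y - 1 + 3 * y ^ 2 / 6 := by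
        have := (((Real.hasDerivAt_sin y).sub (hasDerivAt_id y)).add
          ((hasDerivAt_pow 3 y).div_const 6)).deriv
        simp at this
        exact this
      rw [hd]
      have := Real.one_sub_sq_div_two_le_cos (x := y)
      nlinarith
  have h0 : (0 : ℝ) ∈ Set.Ici (0 : ℝ) := Set.self_mem_Ici
  have := hmono h0 (Set.mem_Ici.2 hx) hx
  simp at this
  linarith

lemma sin_ge_chord {v : ℝ} (hv0 : 0 ≤ v) (hv : v ≤ π / 4) :
    2 * Real.sqrt 2 / π * v ≤ Real.sin v := by
  have hπ := Real.pi_pos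
  set μ : ℝ := 4 * v / π with hμ
  have hμ0 : 0 ≤ μ := by positivity
  have hμ1 : μ ≤ 1 := by
    rw [hμ, div_le_one hπ]; linarith
  have h := strictConcaveOn_sin_Icc.concaveOn.2
    (x := 0) (y := π / 4) ⟨le_refl 0, hπ.le⟩
    ⟨by positivity, by linarith⟩ (sub_nonneg.2 hμ1) hμ0 (by ring)
  have hv' : (1 - μ) • (0 : ℝ) + μ • (π / 4) = v := by
    simp [hμ]; field_simp
  rw [hv'] at h
  have hs : Real.sin (π / 4) = Real.sqrt 2 / 2 := Real.sin_pi_div_four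
  rw [Real.sin_zero, hs] at h
  simp only [smul_eq_mul, mul_zero, zero_add] at h
  calc 2 * Real.sqrt 2 / π * v = μ * (Real.sqrt 2 / 2) := by
        rw [hμ]; field_simp; ring
    _ ≤ Real.sin v := h

theorem stmt_13 (W : ℝ) (hW : W ∈ Set.Ioo 0 (1/2 : ℝ)) :
    π ^ 2 / 8 ≤ (2 * π ^ 2 / Real.cos (π * W) ^ 2) * (1/4 - W ^ 2) ^ 2 ∧
    (2 * π ^ 2 / Real.cos (π * W) ^ 2) * (1/4 - W ^ 2) ^ 2 ≤ 2 := by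
  obtain ⟨hW0, hW2⟩ := hW
  have hπ := Real.pi_pos
  have hq : (0 : ℝ) < 1/4 - W ^ 2 := by nlinarith
  have hcpos : 0 < Real.cos (π * W) :=
    Real.cos_pos_of_mem_Ioo ⟨by nlinarith, by nlinarith⟩
  -- upper bound on cos: cos (πW) ≤ 1 - 4 W²
  have hcos_ub : Real.cos (π * W) ≤ 1 - 4 * W ^ 2 := by
    have hv0 : (0:ℝ) ≤ π * W / 2 := by positivity
    have hv : π * W / 2 ≤ π / 4 := by nlinarith
    have hchord := sin_ge_chord hv0 hv
    have hsq : Real.sin (π * W / 2) ^ 2 = 1 / 2 - Real.cos (π * W) / 2 := by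
      have := Real.sin_sq_eq_half_sub (π * W / 2)
      rw [show 2 * (π * W / 2) = π * W by ring] at this
      exact this
    have h2 : (2 * Real.sqrt 2 / π * (π * W / 2)) ^ 2 ≤ Real.sin (π * W / 2) ^ 2 := by
      apply pow_le_pow_left₀ (by positivity) hchord
    have hsqrt2 : Real.sqrt 2 ^ 2 = 2 := Real.sq_sqrt (by norm_num)
    have hval : (2 * Real.sqrt 2 / π * (π * W / 2)) ^ 2 = 2 * W ^ 2 := by
      field_simp; nlinarith [hsqrt2]
    rw [hval, hsq] at h2
    linarith
  -- lower bound on cos: cos (πW) ≥ π (1/4 - W²)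
  have hcos_lb : π * (1/4 - W ^ 2) ≤ Real.cos (π * W) := by
    set x : ℝ := π * (1/2 - W) with hx
    have hx0 : 0 < x := by rw [hx]; nlinarith
    have hxle : x ≤ π / 2 := by rw [hx]; nlinarith
    have hsin : Real.sin x = Real.cos (π * W) := by
      rw [hx, show π * (1/2 - W) = π / 2 - π * W by ring, Real.sin_pi_div_two_sub]
    have hcube := sin_ge_sub_cube' hx0.le
    have hπ315 := Real.pi_lt_d2
    have hπ3 := Real.pi_gt_three
    have hkey : π * (1/4 - W ^ 2) ≤ x - x ^ 3 / 6 := by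
      have hid : π * (1/4 - W ^ 2) = x - x ^ 2 / π := by
        rw [hx]; field_simp; ring
      rw [hid]
      have : x ^ 3 / 6 ≤ x ^ 2 / π := by
        rw [div_le_div_iff₀ (by norm_num) hπ]
        have h2 : π ^ 2 < 12 := by nlinarith [hπ315, hπ]
        have h1 : x ^ 3 * π ≤ x ^ 2 * (π ^ 2 / 2) := by
          nlinarith [mul_le_mul_of_nonneg_left hxle (mul_nonneg (sq_nonneg x) hπ.le)]
        nlinarith [mul_nonneg (sq_nonneg x) (by linarith : (0:ℝ) ≤ 6 - π ^ 2 / 2)]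
      linarith
    rw [← hsin]
    linarith
  have hc2pos : (0:ℝ) < Real.cos (π * W) ^ 2 := by positivity
  constructor
  · rw [div_mul_eq_mul_div, le_div_iff₀ hc2pos]
    have hc2 : Real.cos (π * W) ^ 2 ≤ 16 * (1/4 - W ^ 2) ^ 2 := by
      nlinarith [hcos_ub, hcpos]
    have := mul_le_mul_of_nonneg_left hc2 (by positivity : (0:ℝ) ≤ π ^ 2 / 8)
    nlinarith [this]
  · rw [div_mul_eq_mul_div, div_le_iff₀ hc2pos]
    have h2 : (π * (1/4 - W ^ 2)) ^ 2 ≤ Real.cos (π * W) ^ 2 :=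
      pow_le_pow_left₀ (by positivity) hcos_lb 2
    calc 2 * π ^ 2 * (1/4 - W ^ 2) ^ 2 = 2 * (π * (1/4 - W ^ 2)) ^ 2 := by ring
      _ ≤ 2 * Real.cos (π * W) ^ 2 := by linarith
end
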